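/- Let g : ℤ → ℂ have period q (q a positive integer). Then ∑_{n≥1} g(n)/(n(n+1)) = g(0) + (1/q) ∑_{r=1}^{q} (g(r−1) − g(r))·ψ(r/q). -/

import Mathlib

open Filter Topology Finset

/-- The digamma function `ψ = Γ'/Γ`, as the derivative of `log Γ`. -/
noncomputable def digamma (x : ℝ) : ℝ := deriv (fun y => Real.log (Real.Gamma y)) x

local notation "γ" => Real.eulerMascheroniConstant

lemma diffAt_logGamma {x : ℝ} (hx : 0 < x) :
    DifferentiableAt ℝ (fun y => Real.log (Real.Gamma y)) x := by
  refine (Real.differentiableAt_Gamma ?_).log (Real.Gamma_ne_zero ?_) <;>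
    exact fun m => ne_of_gt (lt_of_le_of_lt (neg_nonpos.mpr m.cast_nonneg) hx)

lemma digamma_rec {x : ℝ} (hx : 0 < x) : digamma (x + 1) = digamma x + 1 / x := by
  unfold digamma
  rw [← deriv_comp_add_const, one_div, ← Real.deriv_log,
    ← deriv_add (diffAt_logGamma hx) (Real.differentiableAt_log hx.ne')]
  apply Filter.EventuallyEq.deriv_eq
  filter_upwards [eventually_gt_nhds hx] with y hy
  rw [Real.Gamma_add_one hy.ne', Real.log_mul hy.ne' (Real.Gamma_pos_of_pos hy).ne', add_comm, Pi.add_apply]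

lemma digamma_add_nat {x : ℝ} (hx : 0 < x) (n : ℕ) :
    digamma (x + n) = digamma x + ∑ k ∈ range n, 1 / (x + k) := by
  induction n with
  | zero => simp
  | succ n ih =>
      have h : x + (n + 1 : ℕ) = (x + n) + 1 := by push_cast; ring
      rw [h, digamma_rec (by positivity), ih, sum_range_succ, add_assoc]

lemma digamma_nat (n : ℕ) : digamma (n + 1) = -γ + harmonic n := by
  have h1 : (0:ℝ) < n + 1 := by positivity
  have h2 : Real.Gamma (n + 1) ≠ 0 := (Real.Gamma_pos_of_pos h1).ne'
  unfold digamma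
  rw [deriv.log (Real.differentiableAt_Gamma
      (fun m => ne_of_gt (lt_of_le_of_lt (neg_nonpos.mpr m.cast_nonneg) h1))) h2,
    Real.deriv_Gamma_nat, Real.Gamma_nat_eq_factorial, mul_comm, mul_div_assoc,
    div_self (by exact_mod_cast Nat.factorial_ne_zero n), mul_one]

lemma digamma_mono : MonotoneOn digamma (Set.Ioi 0) := by
  have := Real.convexOn_log_Gamma.monotoneOn_deriv
    (fun x hx => diffAt_logGamma (Set.mem_Ioi.mp hx))
  exact this

lemma tendsto_log_sub_sum {x : ℝ} (hx : 0 < x) (hx1 : x ≤ 1) :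
    Tendsto (fun n : ℕ => Real.log n - ∑ k ∈ range n, 1 / (x + k)) atTop (𝓝 (digamma x)) := by
  set c : ℕ → ℝ := fun n => -γ + harmonic n - ∑ k ∈ range n, 1 / (x + k) with hc_def
  have hc : Tendsto c atTop (𝓝 (digamma x)) := by
    have hupper : ∀ᶠ n : ℕ in atTop, c n ≤ digamma x + 1 / n := by
      filter_upwards [eventually_ge_atTop 1] with n hn
      obtain ⟨m, rfl⟩ : ∃ m, n = m + 1 := ⟨n - 1, (Nat.succ_pred_eq_of_pos hn).symm⟩
      have key : digamma ((m:ℝ) + 1) ≤ digamma (x + (m + 1 : ℕ)) := by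
        apply digamma_mono (by exact_mod_cast Set.mem_Ioi.mpr (by positivity : (0:ℝ) < m + 1))
          (Set.mem_Ioi.mpr (by positivity)) (by push_cast; linarith)
      rw [digamma_nat, digamma_add_nat hx] at key
      have hh : (harmonic (m+1) : ℝ) = harmonic m + 1 / ((m:ℝ) + 1) := by
        rw [harmonic_succ]; push_cast; ring
      simp only [hc_def, hh]
      push_cast
      linarith
    have hlower : ∀ᶠ n : ℕ in atTop, digamma x ≤ c n := by
      filter_upwards with n
      have key : digamma (x + n) ≤ digamma ((n:ℝ) + 1) := by
        apply digamma_mono (Set.mem_Ioi.mpr (by positivity))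
          (by exact_mod_cast Set.mem_Ioi.mpr (by positivity : (0:ℝ) < n + 1)) (by linarith)
      rw [digamma_nat, digamma_add_nat hx] at key
      simp only [hc_def]
      linarith
    have h2 : Tendsto (fun n : ℕ => digamma x + 1 / n) atTop (𝓝 (digamma x)) := by
      simpa using tendsto_const_nhds.add (tendsto_one_div_atTop_nhds_zero_nat (𝕜 := ℝ))
    exact tendsto_of_tendsto_of_tendsto_of_le_of_le' tendsto_const_nhds h2 hlower hupper
  have heq : ∀ n : ℕ, Real.log n - ∑ k ∈ range n, 1 / (x + k)
      = c n + γ - ((harmonic n : ℝ) - Real.log n) := by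
    intro n; simp only [hc_def]; ring
  simp only [heq]
  have h3 : Tendsto (fun n : ℕ => c n + γ - ((harmonic n : ℝ) - Real.log n)) atTop
      (𝓝 (digamma x + γ - γ)) :=
    (hc.add tendsto_const_nhds).sub Real.tendsto_harmonic_sub_log
  simpa using h3

theorem periodic_series_n_n_add_one (q : ℕ) (hq : 0 < q) (g : ℤ → ℂ)
    (hper : ∀ n : ℤ, g (n + q) = g n) :
    ∑' n : ℕ+, g n / ((n : ℂ) * ((n : ℂ) + 1)) =
      g 0 + (1 / (q : ℂ)) * ∑ r ∈ Finset.Icc 1 q,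
        (g (r - 1) - g r) * (digamma ((r : ℝ) / q) : ℂ) := by
  have hq' : (q:ℝ) ≠ 0 := by positivity
  have hqC : (q:ℂ) ≠ 0 := by exact_mod_cast (by positivity : (q:ℝ) ≠ 0)
  -- iterated periodicity
  have hper' : ∀ (n : ℤ) (k : ℤ), g (n + k * q) = g n := by
    intro n k
    induction k using Int.induction_on with
    | zero => simp
    | succ i ih => rw [show n + ((i:ℤ)+1)*q = (n + i*q) + q by ring, hper, ih]
    | pred i ih =>
        have h2 := hper (n + (-(i:ℤ)-1)*q)
        rw [show n + (-(i:ℤ)-1)*q + q = n + (-(i:ℤ))*q by ring] at h2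
        rw [← h2]
        exact ih
  -- boundedness
  obtain ⟨C, hC0, hC⟩ : ∃ C, 0 ≤ C ∧ ∀ n : ℤ, ‖g n‖ ≤ C := by
    refine ⟨(Finset.range q).sup' ⟨0, Finset.mem_range.mpr hq⟩ (fun r : ℕ => ‖g r‖), ?_, fun n => ?_⟩
    · exact le_trans (norm_nonneg (g ((0:ℕ):ℤ)))
        (Finset.le_sup' (fun r : ℕ => ‖g (r:ℤ)‖) (Finset.mem_range.mpr hq))
    have hqZ : (0:ℤ) < q := by exact_mod_cast hq
    have h1 : g n = g (n % q) := by
      have h := hper' (n % q) (n / q)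
      rw [show n % (q:ℤ) + n / q * q = n by rw [mul_comm]; exact Int.emod_add_mul_ediv n q] at h
      exact h
    have h2 : (n % q).toNat < q := by
      have := Int.emod_lt_of_pos n hqZ
      have := Int.emod_nonneg n hqZ.ne'
      omega
    have h3 : ((n % (q:ℤ)).toNat : ℤ) = n % q := Int.toNat_of_nonneg (Int.emod_nonneg n hqZ.ne')
    rw [h1, ← h3]
    exact Finset.le_sup' (fun r : ℕ => ‖g r‖) (Finset.mem_range.mpr h2)
  set G : ℕ → ℂ := fun n => g ((n:ℤ)+1) / (((n:ℂ)+1) * ((n:ℂ)+2)) with hG_def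
  -- tsum conversion
  have htsum : ∑' n : ℕ+, g n / ((n : ℂ) * ((n : ℂ) + 1)) = ∑' n : ℕ, G n := by
    rw [← Equiv.pnatEquivNat.symm.tsum_eq]
    refine tsum_congr fun n => ?_
    simp only [hG_def, Equiv.pnatEquivNat, Equiv.symm, Equiv.coe_fn_mk, Nat.succPNat,
      PNat.mk_ofNat, PNat.pow_coe]
    norm_num [Nat.succPNat]
    ring_nf
  -- summability
  have hsG : Summable G := by
    have hs1 : Summable (fun n : ℕ => 1/((n:ℝ))^2) := by
      simpa using Real.summable_one_div_nat_pow.mpr one_lt_two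
    have hs2 : Summable (fun n : ℕ => C * (1/((n:ℝ)+1)^2)) := by
      refine Summable.mul_left C ?_
      have := (summable_nat_add_iff 1).mpr hs1
      refine this.congr fun n => ?_
      push_cast
      ring
    refine Summable.of_norm_bounded hs2 fun n => ?_
    simp only [hG_def, norm_div, norm_mul]
    have e1 : ((n:ℂ)+1) = ((n+1:ℕ):ℂ) := by push_cast; ring
    have e2 : ((n:ℂ)+2) = ((n+2:ℕ):ℂ) := by push_cast; ring
    rw [e1, e2, Complex.norm_natCast, Complex.norm_natCast, mul_one_div]
    push_cast
    refine div_le_div₀ hC0 (hC _) (by positivity) ?_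
    nlinarith [Nat.cast_nonneg (α := ℝ) n]
  have hP : Tendsto (fun M : ℕ => ∑ i ∈ range (q*M), G i) atTop (𝓝 (∑' n : ℕ, G n)) := by
    refine (hsG.hasSum.tendsto_sum_nat).comp ?_
    exact tendsto_atTop_mono (fun M => Nat.le_mul_of_pos_left M hq) tendsto_id
  -- telescoping identity
  have hid1 : ∀ N : ℕ, ∑ i ∈ range N, G i
      = g 0 - g (N:ℤ) / ((N:ℂ)+1) + ∑ i ∈ range N, (g ((i:ℤ)+1) - g (i:ℤ)) / ((i:ℂ)+1) := by
    intro N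
    induction N with
    | zero => simp
    | succ N ih =>
        rw [sum_range_succ, sum_range_succ, ih]
        have h1 : ((N:ℂ)+1) ≠ 0 := by
          have h : ((N:ℂ)+1) = ((N+1:ℕ):ℂ) := by push_cast; ring
          rw [h, Ne, Nat.cast_eq_zero]; omega
        have h2 : ((N:ℂ)+2) ≠ 0 := by
          have h : ((N:ℂ)+2) = ((N+2:ℕ):ℂ) := by push_cast; ring
          rw [h, Ne, Nat.cast_eq_zero]; omega
        simp only [hG_def]
        have key : g ((N:ℤ)+1) / (((N:ℂ)+1)*((N:ℂ)+2))
            = g ((N:ℤ)+1)/((N:ℂ)+1) - g ((N:ℤ)+1)/((N:ℂ)+2) := by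
          rw [div_sub_div _ _ h1 h2, div_eq_div_iff (mul_ne_zero h1 h2) (mul_ne_zero h1 h2)]
          ring
        generalize ∑ i ∈ range N, (g ((i:ℤ) + 1) - g (i:ℤ)) / ((i:ℂ) + 1) = S
        push_cast
        push_cast at key
        rw [key, sub_div]
        ring
  -- regrouping
  have hid2 : ∀ (f : ℕ → ℂ) (M : ℕ),
      ∑ i ∈ range (q*M), f i = ∑ k ∈ range M, ∑ j ∈ range q, f (q*k+j) := by
    intro f M
    induction M with
    | zero => simp
    | succ M ih => rw [Nat.mul_succ, Finset.sum_range_add, ih, sum_range_succ]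
  set A : ℕ → ℕ → ℝ := fun j M => ∑ k ∈ range M, 1/(((j:ℝ)+1)/q + k) with hA_def
  have hid3 : ∀ (j M : ℕ), ((A j M : ℝ):ℂ)/q = ∑ k ∈ range M, (1:ℂ)/((q:ℂ)*k+(j:ℂ)+1) := by
    intro j M
    have hreal : A j M / q = ∑ k ∈ range M, 1/((q:ℝ)*k+(j:ℝ)+1) := by
      rw [hA_def, Finset.sum_div]
      refine Finset.sum_congr rfl fun k _ => ?_
      have h0 : ((j:ℝ)+1)/q + k ≠ 0 := by positivity
      field_simp
      ring
    calc ((A j M : ℝ):ℂ)/q = (((A j M / q : ℝ)):ℂ) := by push_cast; ring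
    _ = ∑ k ∈ range M, (1:ℂ)/((q:ℂ)*k+(j:ℂ)+1) := by rw [hreal]; push_cast; rfl
  -- inner sum with periodicity
  have hid4 : ∀ M : ℕ, ∑ i ∈ range (q*M), (g ((i:ℤ)+1) - g (i:ℤ)) / ((i:ℂ)+1)
      = ∑ j ∈ range q, (g ((j:ℤ)+1) - g (j:ℤ)) * (((A j M : ℝ):ℂ)/q) := by
    intro M
    rw [hid2, Finset.sum_comm]
    refine Finset.sum_congr rfl fun j _ => ?_
    rw [hid3, Finset.mul_sum]
    refine Finset.sum_congr rfl fun k _ => ?_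
    have e1 : g ((q*k+j:ℕ):ℤ) = g (j:ℤ) := by
      rw [show ((q*k+j:ℕ):ℤ) = (j:ℤ) + k*q by push_cast; ring]
      exact hper' _ _
    have e2 : g (((q*k+j:ℕ):ℤ)+1) = g ((j:ℤ)+1) := by
      rw [show ((q*k+j:ℕ):ℤ)+1 = ((j:ℤ)+1) + k*q by push_cast; ring]
      exact hper' _ _
    rw [e1, e2]
    have e3 : ((q*k+j:ℕ):ℂ)+1 = (q:ℂ)*k+(j:ℂ)+1 := by push_cast; ring
    rw [e3]
    ring
  -- sum of coefficients is zero
  have hzero : ∑ j ∈ range q, (g ((j:ℤ)+1) - g (j:ℤ)) = 0 := by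
    have := Finset.sum_range_sub (f := fun j : ℕ => g (j:ℤ)) q
    simp only [Nat.cast_add, Nat.cast_one] at this
    rw [this]
    have h := hper 0
    simp only [zero_add] at h
    rw [h]
    simp
  -- limits
  have hBj : ∀ j ∈ range q, Tendsto (fun M : ℕ => ((A j M - Real.log M : ℝ):ℂ))
      atTop (𝓝 (((-digamma (((j:ℝ)+1)/q) : ℝ):ℂ))) := by
    intro j hj
    have hjq : (j:ℝ)+1 ≤ q := by
      have := Finset.mem_range.mp hj
      exact_mod_cast Nat.succ_le_of_lt this
    have hx : (0:ℝ) < ((j:ℝ)+1)/q := by positivity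
    have hx1 : ((j:ℝ)+1)/q ≤ 1 := by
      rw [div_le_one (by positivity)]; exact hjq
    have h := (tendsto_log_sub_sum hx hx1).neg
    simp only [neg_sub] at h
    exact (Complex.continuous_ofReal.tendsto _).comp h
  have htail : Tendsto (fun M : ℕ => g 0/(((q*M:ℕ):ℂ)+1)) atTop (𝓝 0) := by
    rw [tendsto_zero_iff_norm_tendsto_zero]
    apply squeeze_zero' (Eventually.of_forall fun M => norm_nonneg _)
      (g := fun M : ℕ => ‖g 0‖ * (1/(M:ℝ)))
    · filter_upwards [eventually_ge_atTop 1] with M hM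
      have e1 : (((q*M:ℕ):ℂ)+1) = ((q*M+1:ℕ):ℂ) := by push_cast; ring
      rw [norm_div, e1, Complex.norm_natCast, mul_one_div]
      have hM0 : (0:ℝ) < M := by exact_mod_cast hM
      refine div_le_div₀ (norm_nonneg _) le_rfl hM0 ?_
      have h1q : (1:ℝ) ≤ q := by exact_mod_cast hq
      push_cast
      nlinarith
    · simpa using tendsto_const_nhds.mul (tendsto_one_div_atTop_nhds_zero_nat (𝕜 := ℝ))
  -- the limit of partial sums
  have hkey : Tendsto (fun M : ℕ => ∑ i ∈ range (q*M), G i) atTop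
      (𝓝 (g 0 + ∑ j ∈ range q, (g ((j:ℤ)+1) - g (j:ℤ)) * (((-digamma (((j:ℝ)+1)/q) : ℝ):ℂ)/q))) := by
    have heq : ∀ M : ℕ, ∑ i ∈ range (q*M), G i
        = g 0 - g 0/(((q*M:ℕ):ℂ)+1)
          + ∑ j ∈ range q, (g ((j:ℤ)+1) - g (j:ℤ)) * (((A j M - Real.log M : ℝ):ℂ)/q) := by
      intro M
      rw [hid1, hid4]
      have hg0 : g ((q*M:ℕ):ℤ) = g 0 := by
        rw [show ((q*M:ℕ):ℤ) = (0:ℤ) + M*q by push_cast; ring]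
        exact hper' _ _
      rw [hg0]
      congr 1
      have expand : ∀ j ∈ range q, (g ((j:ℤ)+1) - g (j:ℤ)) * (((A j M - Real.log M : ℝ):ℂ)/q)
          = (g ((j:ℤ)+1) - g (j:ℤ)) * (((A j M : ℝ):ℂ)/q)
            - (g ((j:ℤ)+1) - g (j:ℤ)) * (((Real.log M : ℝ):ℂ)/q) := by
        intro j _
        push_cast
        ring
      rw [Finset.sum_congr rfl expand, Finset.sum_sub_distrib, ← Finset.sum_mul, hzero, zero_mul,
        sub_zero]
    simp only [heq]
    have h1 : Tendsto (fun M : ℕ => ∑ j ∈ range q,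
        (g ((j:ℤ)+1) - g (j:ℤ)) * (((A j M - Real.log M : ℝ):ℂ)/q)) atTop
        (𝓝 (∑ j ∈ range q, (g ((j:ℤ)+1) - g (j:ℤ)) * (((-digamma (((j:ℝ)+1)/q) : ℝ):ℂ)/q))) := by
      refine tendsto_finset_sum _ fun j hj => ?_
      exact ((hBj j hj).div_const _).const_mul _
    have h2 : Tendsto (fun M : ℕ => g 0 - g 0/(((q*M:ℕ):ℂ)+1)
        + ∑ j ∈ range q, (g ((j:ℤ)+1) - g (j:ℤ)) * (((A j M - Real.log M : ℝ):ℂ)/q)) atTop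
        (𝓝 (g 0 - 0 + ∑ j ∈ range q,
          (g ((j:ℤ)+1) - g (j:ℤ)) * (((-digamma (((j:ℝ)+1)/q) : ℝ):ℂ)/q))) :=
      (Tendsto.sub tendsto_const_nhds htail).add h1
    simpa using h2
  -- conclude
  rw [htsum, tendsto_nhds_unique hP hkey]
  congr 1
  rw [Finset.mul_sum, ← Finset.Ico_add_one_right_eq_Icc, Finset.sum_Ico_eq_sum_range]
  try simp only [Nat.add_sub_cancel]
  refine Finset.sum_congr rfl fun j hj => ?_
  have e1 : ((1+j:ℕ):ℤ) - 1 = (j:ℤ) := by push_cast; ring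
  have e2 : ((1+j:ℕ):ℝ) = (j:ℝ)+1 := by push_cast; ring
  rw [e1, e2]
  push_cast
  ring
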